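/- The inequality (p_{n+1} - p_n)/p_n < 2/n holds for infinitely many natural numbers n, where p_n is the n-th prime. -/

import Mathlib

/-- `p n` is the `n`-th prime number (1-indexed), as a real number. -/
noncomputable def p (n : ℕ) : ℝ := Nat.nth Nat.Prime (n - 1)

lemma not_summable_one_div_nth_prime :
    ¬ Summable (fun n : ℕ => 1 / (Nat.nth Nat.Prime n : ℝ)) := by
  have hinf := Nat.infinite_setOf_prime
  have hbij : Function.Bijective
      (fun n : ℕ => (⟨Nat.nth Nat.Prime n, Nat.nth_mem_of_infinite hinf n⟩ : Nat.Primes)) := by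
    constructor
    · intro a b hab
      exact Nat.nth_injective hinf (congrArg Subtype.val hab)
    · rintro ⟨r, hr⟩
      obtain ⟨n, hn⟩ := Nat.subset_range_nth (p := Nat.Prime) hr
      exact ⟨n, Subtype.ext hn⟩
  intro hS
  refine Nat.Primes.not_summable_one_div ?_
  exact ((Equiv.ofBijective _ hbij).summable_iff
    (f := fun r : Nat.Primes => (1 / r : ℝ))).mp hS

theorem gap_over_prime_lt_two_over_n :
    {n : ℕ | (p (n + 1) - p n) / p n < 2 / (n : ℝ)}.Infinite := by
  set q : ℕ → ℝ := fun m => (Nat.nth Nat.Prime m : ℝ) with hq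
  have hq2 : ∀ m, 2 ≤ q m := by
    intro m
    simp only [hq]
    exact_mod_cast (Nat.nth_mem_of_infinite Nat.infinite_setOf_prime m).two_le
  have hqpos : ∀ m, 0 < q m := fun m => lt_of_lt_of_le two_pos (hq2 m)
  by_contra hfin
  rw [Set.not_infinite] at hfin
  obtain ⟨N, hN⟩ := hfin.bddAbove
  -- denominator-free form of the failure of the inequality
  have key : ∀ m, N ≤ m → q m * ((m : ℝ) + 3) ≤ q (m + 1) * ((m : ℝ) + 1) := by
    intro m hm
    have hnot : (m + 1) ∉ {n : ℕ | (p (n + 1) - p n) / p n < 2 / (n : ℝ)} := by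
      intro hmem
      exact absurd (hN hmem) (by omega)
    simp only [Set.mem_setOf_eq, not_lt] at hnot
    have hp1 : p (m + 1) = q m := by simp [p, hq]
    have hp2 : p (m + 1 + 1) = q (m + 1) := by simp [p, hq]
    rw [hp1, hp2] at hnot
    have hpos := hqpos m
    rw [div_le_div_iff₀ (by positivity) hpos] at hnot
    push_cast at hnot
    nlinarith [hqpos (m + 1)]
  -- growth estimate
  have grow : ∀ j : ℕ, q N * (((N : ℝ) + 1 + j) * ((N : ℝ) + 2 + j))
      ≤ q (N + j) * (((N : ℝ) + 1) * ((N : ℝ) + 2)) := by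
    intro j
    induction j with
    | zero => norm_num
    | succ j ih =>
      have hk := key (N + j) (Nat.le_add_right N j)
      push_cast at hk ⊢
      have hc : (0 : ℝ) < (N : ℝ) + 1 + j := by positivity
      have h1 : q N * (((N : ℝ) + 1 + j) * ((N : ℝ) + 2 + j)) * ((N : ℝ) + j + 3)
          ≤ q (N + j) * (((N : ℝ) + 1) * ((N : ℝ) + 2)) * ((N : ℝ) + j + 3) :=
        mul_le_mul_of_nonneg_right ih (by positivity)
      have h2 : q (N + j) * ((N : ℝ) + j + 3) * (((N : ℝ) + 1) * ((N : ℝ) + 2))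
          ≤ q (N + j + 1) * ((N : ℝ) + j + 1) * (((N : ℝ) + 1) * ((N : ℝ) + 2)) :=
        mul_le_mul_of_nonneg_right hk (by positivity)
      have h3 : (q N * (((N : ℝ) + 1 + ((j : ℝ) + 1)) * ((N : ℝ) + 2 + ((j : ℝ) + 1)))) * ((N : ℝ) + 1 + j)
          ≤ (q (N + j + 1) * (((N : ℝ) + 1) * ((N : ℝ) + 2))) * ((N : ℝ) + 1 + j) := by
        nlinarith [h1, h2]
      exact le_of_mul_le_mul_right h3 hc
  -- deduce summability of 1 / q, contradiction
  have hsum2 : Summable (fun j : ℕ => 1 / ((j : ℝ) + 1) ^ 2) := by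
    have := (summable_nat_add_iff 1).mpr
      ((Real.summable_one_div_nat_pow (p := 2)).mpr one_lt_two)
    convert this using 2 with j
    · rfl
    push_cast
    ring
  have hD : (0 : ℝ) < ((N : ℝ) + 1) * ((N : ℝ) + 2) := by positivity
  have hbound : ∀ j : ℕ, 1 / q (N + j)
      ≤ (((N : ℝ) + 1) * ((N : ℝ) + 2) / q N) * (1 / ((j : ℝ) + 1) ^ 2) := by
    intro j
    have hg := grow j
    have hj1 : ((j : ℝ) + 1) ^ 2 ≤ ((N : ℝ) + 1 + j) * ((N : ℝ) + 2 + j) := by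
      nlinarith [Nat.cast_nonneg (α := ℝ) j, Nat.cast_nonneg (α := ℝ) N]
    have hlb : q N * ((j : ℝ) + 1) ^ 2 / (((N : ℝ) + 1) * ((N : ℝ) + 2)) ≤ q (N + j) := by
      rw [div_le_iff₀ hD]
      nlinarith [hqpos N]
    have hlbpos : (0 : ℝ) < q N * ((j : ℝ) + 1) ^ 2 / (((N : ℝ) + 1) * ((N : ℝ) + 2)) := by
      have := hqpos N; positivity
    calc 1 / q (N + j) ≤ 1 / (q N * ((j : ℝ) + 1) ^ 2 / (((N : ℝ) + 1) * ((N : ℝ) + 2))) :=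
          one_div_le_one_div_of_le hlbpos hlb
      _ = (((N : ℝ) + 1) * ((N : ℝ) + 2) / q N) * (1 / ((j : ℝ) + 1) ^ 2) := by
          field_simp
  have hsum : Summable (fun j : ℕ => 1 / q (N + j)) := by
    refine Summable.of_nonneg_of_le (fun j => by positivity) hbound (hsum2.mul_left _)
  have hsum' : Summable (fun m : ℕ => 1 / q m) := by
    rw [← summable_nat_add_iff N]
    convert hsum using 2 with j
    · rfl
    rw [Nat.add_comm]
  exact not_summable_one_div_nth_prime hsum'
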